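/- arXiv:1706.01477 — 2 statements merged into one kernel-verified Lean document; each statement's English description precedes it below -/
import Mathlib

section
/- For x ∈ ℝ³, θ ∈ ℝ, λ ≠ 0, the map φ_x(ξ,y,z) defined by the explicit formula φ_x(ξ,y,z) = ( x1 - (1/λ)(e^{λy} sin(θ - λξ) - sin θ), x2 + (1/λ)(e^{λy} cos(θ - λξ) - cos θ), x3 + (1/(2λ²y))(e^{2λy} - 1)(-ξ + λz) + (1/λ²) e^{λy} sin(λξ) + (1/λ)( x1 (e^{λy} cos(θ - λξ) - cos θ) + x2 (e^{λy} sin(θ - λξ) - sin θ) ) ) has Jacobian determinant det dφ_x(ξ,y,z) = (1/(2λy)) e^{2λy} (e^{2λy} - 1), which is strictly positive for all (ξ,y,z) with y ≠ 0. -/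
open Real

/-- The coefficient `(e^{2λy}-1)/(2λ²y)`, interpreted by its continuous extension
`1/λ` at `y = 0`. -/
noncomputable def gcoef (lam y : ℝ) : ℝ :=
  if y = 0 then 1 / lam else (exp (2 * lam * y) - 1) / (2 * lam ^ 2 * y)

/-- The exponential-type parametrization `φ_x` of a neighborhood of a
Carnot–Carathéodory geodesic in the Heisenberg group, with base point `x`,
initial angle `θ` and curvature `λ`. -/
noncomputable def phiMap (x : ℝ × ℝ × ℝ) (θ lam : ℝ) (p : ℝ × ℝ × ℝ) : ℝ × ℝ × ℝ :=
  (x.1 - (1 / lam) * (exp (lam * p.2.1) * sin (θ - lam * p.1) - sin θ),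
   x.2.1 + (1 / lam) * (exp (lam * p.2.1) * cos (θ - lam * p.1) - cos θ),
   x.2.2 + gcoef lam p.2.1 * (-p.1 + lam * p.2.2)
     + (1 / lam ^ 2) * exp (lam * p.2.1) * sin (lam * p.1)
     + (1 / lam) * (x.1 * (exp (lam * p.2.1) * cos (θ - lam * p.1) - cos θ)
         + x.2.1 * (exp (lam * p.2.1) * sin (θ - lam * p.1) - sin θ)))

/-- Linear equivalence between `ℝ×ℝ×ℝ` and `Fin 3 → ℝ`. -/
noncomputable def e3 : (ℝ × ℝ × ℝ) ≃ₗ[ℝ] (Fin 3 → ℝ) where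
  toFun p := ![p.1, p.2.1, p.2.2]
  invFun f := (f 0, f 1, f 2)
  map_add' p q := by funext i; fin_cases i <;> simp
  map_smul' c p := by funext i; fin_cases i <;> simp
  left_inv p := by simp
  right_inv f := by funext i; fin_cases i <;> simp

/-- Determinant of a continuous linear map on `ℝ×ℝ×ℝ` in terms of its values on
the standard basis vectors. -/
lemma det_clm (L : ℝ × ℝ × ℝ →L[ℝ] ℝ × ℝ × ℝ) :
    L.toLinearMap.det =
      (L (1,0,0)).1 * (L (0,1,0)).2.1 * (L (0,0,1)).2.2
      - (L (1,0,0)).1 * (L (0,0,1)).2.1 * (L (0,1,0)).2.2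
      - (L (0,1,0)).1 * (L (1,0,0)).2.1 * (L (0,0,1)).2.2
      + (L (0,1,0)).1 * (L (0,0,1)).2.1 * (L (1,0,0)).2.2
      + (L (0,0,1)).1 * (L (1,0,0)).2.1 * (L (0,1,0)).2.2
      - (L (0,0,1)).1 * (L (0,1,0)).2.1 * (L (1,0,0)).2.2 := by
  rw [← LinearMap.det_conj L.toLinearMap e3, ← LinearMap.det_toMatrix',
    Matrix.det_fin_three]
  simp [LinearMap.toMatrix'_apply, e3, Fin.isValue]

/-- The Jacobian determinant of `φ_x` equals `(1/(2λy)) e^{2λy} (e^{2λy}-1)`, which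
is strictly positive, for every `(ξ,y,z)` with `y ≠ 0`. -/
theorem phiMap_jacobian (x : ℝ × ℝ × ℝ) (θ lam : ℝ) (hlam : lam ≠ 0) :
    ∀ ξ y z : ℝ, y ≠ 0 →
      (fderiv ℝ (phiMap x θ lam) (ξ, y, z)).toLinearMap.det
          = (1 / (2 * lam * y)) * exp (2 * lam * y) * (exp (2 * lam * y) - 1) ∧
      0 < (1 / (2 * lam * y)) * exp (2 * lam * y) * (exp (2 * lam * y) - 1) := by
  intro ξ y z hy
  have hpos : 0 < (1 / (2 * lam * y)) * exp (2 * lam * y) * (exp (2 * lam * y) - 1) := by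
    rcases lt_or_gt_of_ne (mul_ne_zero (mul_ne_zero two_ne_zero hlam) hy) with h | h
    · have h1 : exp (2 * lam * y) - 1 < 0 := by
        have := Real.exp_lt_one_iff.mpr h
        linarith
      have h2 : 1 / (2 * lam * y) < 0 := div_neg_of_pos_of_neg one_pos h
      nlinarith [mul_pos_of_neg_of_neg h2 h1, exp_pos (2 * lam * y),
        mul_pos (mul_pos_of_neg_of_neg h2 h1) (exp_pos (2 * lam * y))]
    · have h1 : 0 < exp (2 * lam * y) - 1 := by
        nlinarith [Real.add_one_lt_exp (ne_of_gt h)]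
      have h2 : 0 < 1 / (2 * lam * y) := by positivity
      nlinarith [mul_pos (mul_pos h2 h1) (exp_pos (2 * lam * y))]
  refine ⟨?_, hpos⟩
  -- the smooth (if-free) version of the third coordinate's coefficient
  set p : ℝ × ℝ × ℝ := (ξ, y, z) with hp
  have h1 : HasFDerivAt (fun q : ℝ × ℝ × ℝ => q.1)
      (ContinuousLinearMap.fst ℝ ℝ (ℝ × ℝ)) p := hasFDerivAt_fst
  have h2 : HasFDerivAt (fun q : ℝ × ℝ × ℝ => q.2.1)
      ((ContinuousLinearMap.fst ℝ ℝ ℝ).comp (ContinuousLinearMap.snd ℝ ℝ (ℝ × ℝ))) p :=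
    hasFDerivAt_snd.fst
  have h3 : HasFDerivAt (fun q : ℝ × ℝ × ℝ => q.2.2)
      ((ContinuousLinearMap.snd ℝ ℝ ℝ).comp (ContinuousLinearMap.snd ℝ ℝ (ℝ × ℝ))) p :=
    hasFDerivAt_snd.snd
  have hexp := (Real.hasDerivAt_exp (lam * p.2.1)).comp_hasFDerivAt p (h2.const_mul lam)
  have hsin := (Real.hasDerivAt_sin (θ - lam * p.1)).comp_hasFDerivAt p
    ((h1.const_mul lam).const_sub θ)
  have hcos := (Real.hasDerivAt_cos (θ - lam * p.1)).comp_hasFDerivAt p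
    ((h1.const_mul lam).const_sub θ)
  have hsl := (Real.hasDerivAt_sin (lam * p.1)).comp_hasFDerivAt p (h1.const_mul lam)
  have hexp2 := (Real.hasDerivAt_exp (2 * lam * p.2.1)).comp_hasFDerivAt p
    (h2.const_mul (2 * lam))
  have hden : (2 : ℝ) * lam ^ 2 * p.2.1 ≠ 0 := by
    simp only [hp]
    positivity
  have hg1 : HasDerivAt (fun t : ℝ => (exp (2 * lam * t) - 1) / (2 * lam ^ 2 * t)) _ y :=
    ((((Real.hasDerivAt_exp (2 * lam * y)).comp y
        ((hasDerivAt_id y).const_mul (2 * lam))).sub_const 1).div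
      ((hasDerivAt_id y).const_mul (2 * lam ^ 2)) (by simpa using hden))
  have hg := hg1.comp_hasFDerivAt p h2
  have hf1 := (((hexp.mul hsin).sub_const (sin θ)).const_mul (1 / lam)).const_sub x.1
  have hf2 := ((((hexp.mul hcos).sub_const (cos θ)).const_mul (1 / lam)).const_add x.2.1)
  have hf3 :=
    (((hg.mul (h1.neg.add (h3.const_mul lam))).const_add x.2.2).add
      ((hexp.const_mul (1 / lam ^ 2)).mul hsl)).add
      (((((hexp.mul hcos).sub_const (cos θ)).const_mul x.1).add
        (((hexp.mul hsin).sub_const (sin θ)).const_mul x.2.1)).const_mul (1 / lam))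
  have hD := HasFDerivAt.prodMk hf1 (HasFDerivAt.prodMk hf2 hf3)
  -- phiMap agrees with the smooth version near p
  have hEq : phiMap x θ lam =ᶠ[nhds p] (fun q : ℝ × ℝ × ℝ =>
      (x.1 - 1 / lam * (exp (lam * q.2.1) * sin (θ - lam * q.1) - sin θ),
        x.2.1 + 1 / lam * (exp (lam * q.2.1) * cos (θ - lam * q.1) - cos θ),
        x.2.2 + (exp (2 * lam * q.2.1) - 1) / (2 * lam ^ 2 * q.2.1) * (-q.1 + lam * q.2.2)
          + 1 / lam ^ 2 * exp (lam * q.2.1) * sin (lam * q.1)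
          + 1 / lam * (x.1 * (exp (lam * q.2.1) * cos (θ - lam * q.1) - cos θ)
              + x.2.1 * (exp (lam * q.2.1) * sin (θ - lam * q.1) - sin θ)))) := by
    have hopen : IsOpen {q : ℝ × ℝ × ℝ | q.2.1 ≠ 0} :=
      isOpen_ne.preimage (continuous_snd.fst)
    filter_upwards [hopen.mem_nhds (by simpa [hp] using hy)] with q hq
    simp [phiMap, gcoef, hq]
  have hD' : HasFDerivAt (phiMap x θ lam) _ p := hD.congr_of_eventuallyEq hEq
  rw [hD'.fderiv, det_clm]
  have hy1 : p.2.1 = y := rfl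
  simp only [ContinuousLinearMap.prod_apply, ContinuousLinearMap.add_apply,
    ContinuousLinearMap.coe_smul', Pi.smul_apply, ContinuousLinearMap.coe_comp',
    Function.comp_apply, ContinuousLinearMap.coe_fst', ContinuousLinearMap.coe_snd',
    ContinuousLinearMap.smul_apply, ContinuousLinearMap.neg_apply,
    ContinuousLinearMap.coe_sub', Pi.sub_apply, Pi.add_apply, hy1, smul_eq_mul]
  have pyth := sin_sq_add_cos_sq (θ - lam * p.1)
  have hexpadd : exp (2 * lam * y) = exp (lam * y) * exp (lam * y) := by
    rw [← Real.exp_add]; ring_nf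
  rw [hexpadd]
  field_simp
  linear_combination (y * exp (lam * y) ^ 2 * lam - y * lam) * pyth
end

section
/- Consider the first-order linear ODE system on ℝ² given by ċ₁ = (ξ cos θ - y sin θ) + λ(ξ(c₂ - x₂) + y(c₁ - x₁)), ċ₂ = (ξ sin θ + y cos θ) + λ(-ξ(c₁ - x₁) + y(c₂ - x₂)), with initial condition (c₁(0), c₂(0)) = (x₁, x₂), where ξ, y, θ, λ, x₁, x₂ are real constants with λ ≠ 0. Then the unique solution is c₁(t) = x₁ - (1/λ)(e^{λty} cos(λtξ) - 1) sin θ + (1/λ) e^{λty} sin(λtξ) cos θ and c₂(t) = x₂ + (1/λ) e^{λty} sin(λtξ) sin θ + (1/λ)(e^{λty} cos(λtξ) - 1) cos θ. Moreover, along this solution, (cos θ + λ(c₂ - x₂))² + (sin θ - λ(c₁ - x₁))² = e^{2λty}. -/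
open Real

/-- Explicit first component of the solution of the projected geodesic flow ODE. -/
noncomputable def sol1 (x₁ θ lam ξ y : ℝ) (t : ℝ) : ℝ :=
  x₁ - (1 / lam) * (exp (lam * t * y) * cos (lam * t * ξ) - 1) * sin θ
    + (1 / lam) * exp (lam * t * y) * sin (lam * t * ξ) * cos θ

/-- Explicit second component of the solution of the projected geodesic flow ODE. -/
noncomputable def sol2 (x₂ θ lam ξ y : ℝ) (t : ℝ) : ℝ :=
  x₂ + (1 / lam) * exp (lam * t * y) * sin (lam * t * ξ) * sin θ
    + (1 / lam) * (exp (lam * t * y) * cos (lam * t * ξ) - 1) * cos θ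

lemma hasDerivAt_E (lam y t : ℝ) :
    HasDerivAt (fun t : ℝ => exp (lam * t * y)) (lam * y * exp (lam * t * y)) t := by
  have h : HasDerivAt (fun t : ℝ => lam * t * y) (lam * y) t := by
    simpa using ((hasDerivAt_id t).const_mul lam).mul_const y
  simpa [mul_comm] using h.exp

lemma hasDerivAt_C (lam ξ t : ℝ) :
    HasDerivAt (fun t : ℝ => cos (lam * t * ξ)) (-(lam * ξ * sin (lam * t * ξ))) t := by
  have h : HasDerivAt (fun t : ℝ => lam * t * ξ) (lam * ξ) t := by
    simpa using ((hasDerivAt_id t).const_mul lam).mul_const ξ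
  simpa [mul_comm] using h.cos

lemma hasDerivAt_S (lam ξ t : ℝ) :
    HasDerivAt (fun t : ℝ => sin (lam * t * ξ)) (lam * ξ * cos (lam * t * ξ)) t := by
  have h : HasDerivAt (fun t : ℝ => lam * t * ξ) (lam * ξ) t := by
    simpa using ((hasDerivAt_id t).const_mul lam).mul_const ξ
  simpa [mul_comm] using h.sin

lemma key1 (x₁ x₂ θ lam ξ y : ℝ) (hlam : lam ≠ 0) (t : ℝ) :
    HasDerivAt (sol1 x₁ θ lam ξ y)
      ((ξ * cos θ - y * sin θ)
        + lam * (ξ * (sol2 x₂ θ lam ξ y t - x₂) + y * (sol1 x₁ θ lam ξ y t - x₁))) t := by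
  have h3 := (((((hasDerivAt_E lam y t).mul (hasDerivAt_C lam ξ t)).sub_const 1).const_mul
      (1/lam)).mul_const (sin θ)).const_sub x₁ |>.add
    ((((hasDerivAt_E lam y t).const_mul (1/lam)).mul (hasDerivAt_S lam ξ t)).mul_const (cos θ))
  have heq : sol1 x₁ θ lam ξ y = fun s : ℝ =>
      x₁ - 1 / lam * (exp (lam * s * y) * cos (lam * s * ξ) - 1) * sin θ
        + 1 / lam * exp (lam * s * y) * sin (lam * s * ξ) * cos θ := rfl
  rw [heq]
  refine h3.congr_deriv ?_
  simp only [sol1, sol2]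
  field_simp
  ring

lemma key2 (x₁ x₂ θ lam ξ y : ℝ) (hlam : lam ≠ 0) (t : ℝ) :
    HasDerivAt (sol2 x₂ θ lam ξ y)
      ((ξ * sin θ + y * cos θ)
        + lam * (-ξ * (sol1 x₁ θ lam ξ y t - x₁) + y * (sol2 x₂ θ lam ξ y t - x₂))) t := by
  have h3 := ((((hasDerivAt_E lam y t).const_mul (1/lam)).mul (hasDerivAt_S lam ξ t)).mul_const
      (sin θ)).const_add x₂ |>.add
    (((((hasDerivAt_E lam y t).mul (hasDerivAt_C lam ξ t)).sub_const 1).const_mul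
      (1/lam)).mul_const (cos θ))
  have heq : sol2 x₂ θ lam ξ y = fun s : ℝ =>
      x₂ + 1 / lam * exp (lam * s * y) * sin (lam * s * ξ) * sin θ
        + 1 / lam * (exp (lam * s * y) * cos (lam * s * ξ) - 1) * cos θ := rfl
  rw [heq]
  refine h3.congr_deriv ?_
  simp only [sol1, sol2]
  field_simp
  ring

lemma uniq_aux (x₁ x₂ θ lam ξ y : ℝ) (hlam : lam ≠ 0) (c₁ c₂ : ℝ → ℝ)
    (h10 : c₁ 0 = x₁) (h20 : c₂ 0 = x₂)
    (hc : ∀ t : ℝ, HasDerivAt c₁ ((ξ * cos θ - y * sin θ)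
        + lam * (ξ * (c₂ t - x₂) + y * (c₁ t - x₁))) t ∧
      HasDerivAt c₂ ((ξ * sin θ + y * cos θ)
        + lam * (-ξ * (c₁ t - x₁) + y * (c₂ t - x₂))) t)
    (t : ℝ) : c₁ t = sol1 x₁ θ lam ξ y t ∧ c₂ t = sol2 x₂ θ lam ξ y t := by
  set g : ℝ → ℝ := fun t => exp (-(2*lam*t*y)) *
    ((c₁ t - sol1 x₁ θ lam ξ y t)^2 + (c₂ t - sol2 x₂ θ lam ξ y t)^2) with hg
  have hgd : ∀ s : ℝ, HasDerivAt g 0 s := by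
    intro s
    have hE' : HasDerivAt (fun t : ℝ => exp (-(2*lam*t*y))) (-(2*lam*y) * exp (-(2*lam*s*y))) s := by
      have h : HasDerivAt (fun t : ℝ => -(2*lam*t*y)) (-(2*lam*y)) s := by
        simpa using (((hasDerivAt_id s).const_mul (2*lam)).mul_const y).fun_neg
      simpa [mul_comm] using h.exp
    have hu := (hc s).1.sub (key1 x₁ x₂ θ lam ξ y hlam s)
    have hv := (hc s).2.sub (key2 x₁ x₂ θ lam ξ y hlam s)
    have h := hE'.mul ((hu.pow 2).add (hv.pow 2))
    refine h.congr_deriv ?_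
    simp only [Pi.add_apply, Pi.sub_apply, Pi.pow_apply]
    push_cast
    ring
  have hconst : ∀ s : ℝ, g s = g 0 :=
    fun s => is_const_of_deriv_eq_zero (fun x => (hgd x).differentiableAt)
      (fun x => (hgd x).deriv) s 0
  have hinit1 : sol1 x₁ θ lam ξ y 0 = x₁ := by simp [sol1]
  have hinit2 : sol2 x₂ θ lam ξ y 0 = x₂ := by simp [sol2]
  have hg0 : g 0 = 0 := by simp [hg, h10, h20, hinit1, hinit2]
  have h0 : (c₁ t - sol1 x₁ θ lam ξ y t)^2 + (c₂ t - sol2 x₂ θ lam ξ y t)^2 = 0 := by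
    have h := (hconst t).trans hg0
    rw [hg] at h
    simp only [mul_eq_zero] at h
    rcases h with h | h
    · exact absurd h (exp_ne_zero _)
    · exact h
  constructor
  · have h1 : (c₁ t - sol1 x₁ θ lam ξ y t)^2 = 0 := by
      nlinarith [sq_nonneg (c₂ t - sol2 x₂ θ lam ξ y t), sq_nonneg (c₁ t - sol1 x₁ θ lam ξ y t)]
    have := pow_eq_zero_iff (two_ne_zero) |>.mp h1
    linarith
  · have h1 : (c₂ t - sol2 x₂ θ lam ξ y t)^2 = 0 := by
      nlinarith [sq_nonneg (c₂ t - sol2 x₂ θ lam ξ y t), sq_nonneg (c₁ t - sol1 x₁ θ lam ξ y t)]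
    have := pow_eq_zero_iff (two_ne_zero) |>.mp h1
    linarith

/-- The first-order linear system
`ċ₁ = (ξ cos θ - y sin θ) + λ(ξ(c₂-x₂) + y(c₁-x₁))`,
`ċ₂ = (ξ sin θ + y cos θ) + λ(-ξ(c₁-x₁) + y(c₂-x₂))`, `(c₁(0),c₂(0)) = (x₁,x₂)`,
has the stated explicit functions as its unique solution; moreover along the solution
`(cos θ + λ(c₂-x₂))² + (sin θ - λ(c₁-x₁))² = e^{2λty}`. -/
theorem geodesic_flow_ode_solution (x₁ x₂ θ lam ξ y : ℝ) (hlam : lam ≠ 0) :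
    (sol1 x₁ θ lam ξ y 0 = x₁ ∧ sol2 x₂ θ lam ξ y 0 = x₂ ∧
      (∀ t : ℝ,
        HasDerivAt (sol1 x₁ θ lam ξ y)
          ((ξ * cos θ - y * sin θ)
            + lam * (ξ * (sol2 x₂ θ lam ξ y t - x₂) + y * (sol1 x₁ θ lam ξ y t - x₁))) t ∧
        HasDerivAt (sol2 x₂ θ lam ξ y)
          ((ξ * sin θ + y * cos θ)
            + lam * (-ξ * (sol1 x₁ θ lam ξ y t - x₁) + y * (sol2 x₂ θ lam ξ y t - x₂))) t)) ∧
    (∀ c₁ c₂ : ℝ → ℝ,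
      c₁ 0 = x₁ → c₂ 0 = x₂ →
      (∀ t : ℝ,
        HasDerivAt c₁
          ((ξ * cos θ - y * sin θ)
            + lam * (ξ * (c₂ t - x₂) + y * (c₁ t - x₁))) t ∧
        HasDerivAt c₂
          ((ξ * sin θ + y * cos θ)
            + lam * (-ξ * (c₁ t - x₁) + y * (c₂ t - x₂))) t) →
      ∀ t : ℝ, c₁ t = sol1 x₁ θ lam ξ y t ∧ c₂ t = sol2 x₂ θ lam ξ y t) ∧
    (∀ t : ℝ,
      (cos θ + lam * (sol2 x₂ θ lam ξ y t - x₂)) ^ 2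
        + (sin θ - lam * (sol1 x₁ θ lam ξ y t - x₁)) ^ 2 = exp (2 * lam * t * y)) := by
  refine ⟨⟨by simp [sol1], by simp [sol2],
      fun t => ⟨key1 x₁ x₂ θ lam ξ y hlam t, key2 x₁ x₂ θ lam ξ y hlam t⟩⟩,
    fun c₁ c₂ h10 h20 hc t => uniq_aux x₁ x₂ θ lam ξ y hlam c₁ c₂ h10 h20 hc t, ?_⟩
  intro t
  have h1 := sin_sq_add_cos_sq θ
  have h2 := sin_sq_add_cos_sq (lam * t * ξ)
  have h3 : exp (2 * lam * t * y) = exp (lam * t * y) * exp (lam * t * y) := by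
    rw [← exp_add]; ring_nf
  simp only [sol1, sol2]
  rw [h3]
  field_simp
  linear_combination (exp (lam*t*y) * exp (lam*t*y) * (sin θ ^ 2 + cos θ ^ 2)) * h2
    + exp (lam*t*y) * exp (lam*t*y) * h1
end
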